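/- Let R = ℤ[q^{±1}, q₁^{±1}, q₂^{±1}] and suppose P₁, P₂ ∈ R satisfy (q₂ - q₂^{-1})(q₂q - q₂^{-1}q^{-1})·P₁ = (q₁ - q₁^{-1})(q₁q - q₁^{-1}q^{-1})·P₂. Then (q₁ - q₁^{-1})(q₁q - q₁^{-1}q^{-1}) divides P₁ in R. -/

import Mathlib

open LaurentPolynomial

variable {R : Type*} [CommRing R]

lemma coeff_single_mul (k : ℤ) (a : R) (p : R[T;T⁻¹]) (m : ℤ) :
    (AddMonoidAlgebra.single k a * p).coeff m = a * p.coeff (m - k) := by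
  have := AddMonoidAlgebra.coeff_single_mul_apply p a k m
  simpa [neg_add_eq_sub] using this

lemma single_eq_C_mul_T' (k : ℤ) (a : R) :
    AddMonoidAlgebra.single k a = C a * T k := single_eq_C_mul_T a k

lemma coeff_sub (p q : R[T;T⁻¹]) (m : ℤ) : (p - q).coeff m = p.coeff m - q.coeff m := rfl

lemma coeff_add (p q : R[T;T⁻¹]) (m : ℤ) : (p + q).coeff m = p.coeff m + q.coeff m := rfl

lemma C_dvd_of_forall (A : R) (p : R[T;T⁻¹]) (h : ∀ n, A ∣ p.coeff n) : C A ∣ p := by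
  classical
  choose f hf using h
  refine ⟨∑ n ∈ p.coeff.support, AddMonoidAlgebra.single n (f n), ?_⟩
  ext m
  rw [Finset.mul_sum]
  rw [AddMonoidAlgebra.coeff_sum, Finsupp.finset_sum_apply]
  have key : ∀ n ∈ p.coeff.support, (C A * AddMonoidAlgebra.single n (f n)).coeff m
      = if n = m then p.coeff m else 0 := by
    intro n _
    have h2 : (C A) * AddMonoidAlgebra.single n (f n)
        = AddMonoidAlgebra.single n (A * f n) := by
      rw [← single_eq_C]
      rw [AddMonoidAlgebra.single_mul_single]
      simp
    rw [h2]
    have : (AddMonoidAlgebra.single n (A * f n) : R[T;T⁻¹]).coeff m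
        = if n = m then A * f n else 0 := Finsupp.single_apply
    rw [this, hf]
    split <;> simp_all
  rw [Finset.sum_congr rfl key, Finset.sum_ite_eq' p.coeff.support m (fun _ => p.coeff m)]
  split <;> simp_all [Finsupp.notMem_support_iff]

lemma key (A c c' : R) (hc : IsUnit c) (p q2 : R[T;T⁻¹])
    (h : (T 1 - T (-1)) * (C c * T 1 - C c' * T (-1)) * p = C A * q2) :
    ∀ n, A ∣ p.coeff n := by
  classical
  have h' : (AddMonoidAlgebra.single 2 c - AddMonoidAlgebra.single 0 c'
      - AddMonoidAlgebra.single 0 c + AddMonoidAlgebra.single (-2) c') * p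
      = AddMonoidAlgebra.single 0 A * q2 := by
    rw [single_eq_C_mul_T', single_eq_C_mul_T', single_eq_C_mul_T',
      single_eq_C_mul_T', single_eq_C_mul_T', T_zero]
    rw [mul_one, mul_one, mul_one, ← h]
    have e1 : (T 2 : R[T;T⁻¹]) = T 1 * T 1 := by rw [← T_add]; norm_num
    have e2 : (T (-2) : R[T;T⁻¹]) = T (-1) * T (-1) := by rw [← T_add]; norm_num
    have hT : (T 1 : R[T;T⁻¹]) * T (-1) = 1 := by rw [← T_add]; norm_num
    rw [e1, e2]
    linear_combination (C c + C c') * p * hT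
  have hco : ∀ m : ℤ, c * p.coeff (m - 2) - c' * p.coeff m - c * p.coeff m + c' * p.coeff (m + 2)
      = A * q2.coeff m := by
    intro m
    have hm : (((AddMonoidAlgebra.single 2 c - AddMonoidAlgebra.single 0 c'
      - AddMonoidAlgebra.single 0 c + AddMonoidAlgebra.single (-2) c') * p
          : R[T;T⁻¹])).coeff m
      = ((AddMonoidAlgebra.single 0 A * q2 : R[T;T⁻¹])).coeff m := by rw [h']
    simp only [sub_mul, add_mul] at hm
    rw [coeff_add, coeff_sub, coeff_sub, coeff_single_mul, coeff_single_mul,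
      coeff_single_mul, coeff_single_mul, coeff_single_mul] at hm
    simpa using hm
  obtain ⟨N, hN⟩ : ∃ N : ℤ, ∀ x ∈ p.coeff.support, x ≤ N := Finset.exists_le p.coeff.support
  have hzero : ∀ m : ℤ, N < m → p.coeff m = 0 := by
    intro m hm
    by_contra hne
    exact absurd (hN m (Finsupp.mem_support_iff.mpr hne)) (not_le.mpr hm)
  have main : ∀ k : ℕ, ∀ n : ℤ, N - k ≤ n → A ∣ p.coeff n := by
    intro k
    induction k using Nat.strong_induction_on with
    | _ k ih =>
      intro n hn
      rcases lt_or_ge N n with hlt | hle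
      · rw [hzero n hlt]; exact dvd_zero A
      · have h2 : A ∣ p.coeff (n + 2) := by
          rcases lt_or_ge N (n+2) with hx | hx
          · rw [hzero _ hx]; exact dvd_zero A
          · exact ih (k-1) (by omega) (n+2) (by omega)
        have h4 : A ∣ p.coeff (n + 4) := by
          rcases lt_or_ge N (n+4) with hx | hx
          · rw [hzero _ hx]; exact dvd_zero A
          · exact ih (k-1) (by omega) (n+4) (by omega)
        have hrel := hco (n + 2)
        have e3 : n + 2 - 2 = n := by ring
        have e4 : n + 2 + 2 = n + 4 := by ring
        rw [e3, e4] at hrel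
        have heq : c * p.coeff n = A * q2.coeff (n + 2) + c' * p.coeff (n + 2) + c * p.coeff (n + 2)
            - c' * p.coeff (n + 4) := by linear_combination hrel
        have hdvd : A ∣ c * p.coeff n := by
          rw [heq]
          exact dvd_sub (dvd_add (dvd_add (Dvd.intro _ rfl) (h2.mul_left _))
            (h2.mul_left _)) (h4.mul_left _)
        exact (hc.dvd_mul_left).mp hdvd
  intro n
  exact main (N - n).toNat n (by omega)

open LaurentPolynomial in
theorem stmt_6
    (q qi q₁ q₁i q₂ q₂i P₁ P₂ :
      LaurentPolynomial (LaurentPolynomial (LaurentPolynomial ℤ)))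
    (hq : q = LaurentPolynomial.C (LaurentPolynomial.C (LaurentPolynomial.T 1)))
    (hqi : qi = LaurentPolynomial.C (LaurentPolynomial.C (LaurentPolynomial.T (-1))))
    (hq₁ : q₁ = LaurentPolynomial.C (LaurentPolynomial.T 1))
    (hq₁i : q₁i = LaurentPolynomial.C (LaurentPolynomial.T (-1)))
    (hq₂ : q₂ = LaurentPolynomial.T 1)
    (hq₂i : q₂i = LaurentPolynomial.T (-1))
    (h : (q₂ - q₂i) * (q₂ * q - q₂i * qi) * P₁ =
          (q₁ - q₁i) * (q₁ * q - q₁i * qi) * P₂) :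
    (q₁ - q₁i) * (q₁ * q - q₁i * qi) ∣ P₁ := by
  subst hq hqi hq₁ hq₁i hq₂ hq₂i
  set c : LaurentPolynomial (LaurentPolynomial ℤ) := C (T 1) with hcdef
  set c' : LaurentPolynomial (LaurentPolynomial ℤ) := C (T (-1)) with hc'def
  set A : LaurentPolynomial (LaurentPolynomial ℤ) :=
    (T 1 - T (-1)) * (T 1 * c - T (-1) * c') with hAdef
  have hA : (C (T 1) - C (T (-1))) * (C (T 1) * C c - C (T (-1)) * C c')
      = (C A : LaurentPolynomial (LaurentPolynomial (LaurentPolynomial ℤ))) := by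
    rw [hAdef]
    push_cast [map_mul, map_sub]
    ring
  have hc : IsUnit c := (isUnit_T 1).map (C : LaurentPolynomial ℤ →+* _)
  have h' : (T 1 - T (-1)) * (C c * T 1 - C c' * T (-1)) * P₁ = C A * P₂ := by
    rw [← hA, ← h, T_mul 1 (C c), T_mul (-1) (C c')]
  have hall := key A c c' hc P₁ P₂ h'
  have hdvd := C_dvd_of_forall A P₁ hall
  rwa [← hA] at hdvd
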